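/- Let K be a quadratic number field. The Dirichlet series C_K(s) = ζ(s)^{-1} Σ_{m≥1} m^{-s} Π_{𝔭|m̃}(1+N(𝔭)^{-1})^{-1} Π_{p|m̃}(1 - p^{-2} Π_{𝔭|p}(1+N(𝔭)^{-1})^{-1})^{-1}, where m̃ = m/(m,2D_K), converges absolutely for Re(s) > 1 and extends holomorphically to Re(s) > 1/2. -/

import Mathlib

open NumberField

open scoped Classical in
/-- The coefficient
`Π_{𝔭|m̃}(1+N(𝔭)^{-1})^{-1} · Π_{p|m̃}(1 - p^{-2} Π_{𝔭|p}(1+N(𝔭)^{-1})^{-1})^{-1}`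
with `m̃ = m/(m, 2D_K)`, where `𝔭` runs over prime ideals of `O_K` and `p` over
rational primes. -/
noncomputable def CKcoeff (K : Type*) [Field K] [NumberField K] (m : ℕ) : ℝ :=
  let mt : ℕ := m / Nat.gcd m (2 * (discr K).natAbs)
  (∏ 𝔭 ∈ (UniqueFactorizationMonoid.normalizedFactors
      (Ideal.span {(mt : 𝓞 K)} : Ideal (𝓞 K))).toFinset,
    (1 + (Ideal.absNorm 𝔭 : ℝ)⁻¹)⁻¹) *
  ∏ p ∈ mt.primeFactors,
    (1 - (p : ℝ) ^ (-2 : ℤ) *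
      ∏ 𝔭 ∈ (UniqueFactorizationMonoid.normalizedFactors
          (Ideal.span {(p : 𝓞 K)} : Ideal (𝓞 K))).toFinset,
        (1 + (Ideal.absNorm 𝔭 : ℝ)⁻¹)⁻¹)⁻¹

open UniqueFactorizationMonoid Finset LSeries
open scoped Classical LSeries.notation
set_option linter.unusedSectionVars false
set_option linter.unusedVariables false
set_option maxHeartbeats 1000000

namespace CKaux

open UniqueFactorizationMonoid Finset

open scoped Classical

variable (K : Type*) [Field K] [NumberField K]

/-- `2 |D_K|`. -/
noncomputable def g : ℕ := 2 * (discr K).natAbs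

lemma g_ne_zero : g K ≠ 0 := by
  have := discr_ne_zero K
  simp [g, Int.natAbs_eq_zero, this]

/-- The set of prime ideals above `p`. -/
noncomputable def Fp (p : ℕ) : Finset (Ideal (𝓞 K)) :=
  (normalizedFactors (Ideal.span {(p : 𝓞 K)} : Ideal (𝓞 K))).toFinset

/-- local factor `A_p`. -/
noncomputable def Ap (p : ℕ) : ℝ :=
  ∏ 𝔭 ∈ Fp K p, (1 + (Ideal.absNorm 𝔭 : ℝ)⁻¹)⁻¹

/-- local factor `A_p B_p`. -/
noncomputable def loc (p : ℕ) : ℝ := Ap K p * (1 - (p : ℝ) ^ (-2 : ℤ) * Ap K p)⁻¹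

/-- The coefficients of the Dirichlet series of `C_K`. -/
noncomputable def a (d : ℕ) : ℝ :=
  if d ≠ 0 ∧ ∀ p ∈ d.primeFactors, d.factorization p = (g K).factorization p + 1
  then ∏ p ∈ d.primeFactors, (loc K p - 1) else 0

lemma span_ne_zero {m : ℕ} (hm : m ≠ 0) :
    (Ideal.span {(m : 𝓞 K)} : Ideal (𝓞 K)) ≠ 0 := by
  simp only [ne_eq, Ideal.zero_eq_bot, Ideal.span_singleton_eq_bot, Nat.cast_eq_zero]
  exact hm

lemma span_dvd_span {m n : ℕ} (h : m ∣ n) :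
    (Ideal.span {(m : 𝓞 K)} : Ideal (𝓞 K)) ∣ Ideal.span {(n : 𝓞 K)} := by
  obtain ⟨k, rfl⟩ := h
  rw [Nat.cast_mul, ← Ideal.span_singleton_mul_span_singleton]
  exact Dvd.intro _ rfl

lemma dvd_span_iff {𝔭 : Ideal (𝓞 K)} (h𝔭 : Prime 𝔭) {m : ℕ} (hm : m ≠ 0) :
    𝔭 ∣ Ideal.span {(m : 𝓞 K)} ↔ ∃ p ∈ m.primeFactors, 𝔭 ∣ Ideal.span {(p : 𝓞 K)} := by
  constructor
  · intro h
    have hm' : m = ∏ p ∈ m.primeFactors, p ^ m.factorization p := by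
      rw [← Nat.support_factorization]
      exact (Nat.factorization_prod_pow_eq_self hm).symm
    rw [hm'] at h
    push_cast at h
    rw [← Ideal.prod_span_singleton] at h
    obtain ⟨p, hp, hdvd⟩ := (Prime.dvd_finset_prod_iff h𝔭 _).mp h
    refine ⟨p, hp, ?_⟩
    rw [← Ideal.span_singleton_pow] at hdvd
    exact h𝔭.dvd_of_dvd_pow hdvd
  · rintro ⟨p, hp, hdvd⟩
    exact hdvd.trans (span_dvd_span K (Nat.dvd_of_mem_primeFactors hp))

lemma mem_Fp_iff {𝔭 : Ideal (𝓞 K)} {p : ℕ} (hp : p ≠ 0) :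
    𝔭 ∈ Fp K p ↔ Prime 𝔭 ∧ 𝔭 ∣ Ideal.span {(p : 𝓞 K)} := by
  rw [Fp, Multiset.mem_toFinset,
    UniqueFactorizationMonoid.mem_normalizedFactors_iff (span_ne_zero K hp)]

lemma Fp_disjoint {p q : ℕ} (hp : p.Prime) (hq : q.Prime) (hpq : p ≠ q) :
    Disjoint (Fp K p) (Fp K q) := by
  rw [Finset.disjoint_left]
  intro 𝔭 h1 h2
  rw [mem_Fp_iff K hp.ne_zero] at h1
  rw [mem_Fp_iff K hq.ne_zero] at h2
  have hco : IsCoprime ((p : ℕ) : 𝓞 K) ((q : ℕ) : 𝓞 K) := by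
    have : IsCoprime ((p : ℤ)) ((q : ℤ)) :=
      Nat.isCoprime_iff_coprime.mpr ((Nat.coprime_primes hp hq).mpr hpq)
    have := this.map (algebraMap ℤ (𝓞 K))
    simpa using this
  have hco' : IsCoprime (Ideal.span {((p : ℕ) : 𝓞 K)}) (Ideal.span {((q : ℕ) : 𝓞 K)}) :=
    (Ideal.isCoprime_span_singleton_iff _ _).mpr hco
  have h1' := Ideal.le_of_dvd h1.2
  have h2' := Ideal.le_of_dvd h2.2
  have : (⊤ : Ideal (𝓞 K)) ≤ 𝔭 := by
    rw [Ideal.isCoprime_iff_sup_eq] at hco'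
    rw [← hco']
    exact sup_le h1' h2'
  exact h1.1.not_unit (Ideal.isUnit_iff.mpr (top_le_iff.mp this))

/-- Splitting the prime-ideal factors of `span m` according to rational primes. -/
lemma factors_span_eq {m : ℕ} (hm : m ≠ 0) :
    (normalizedFactors (Ideal.span {(m : 𝓞 K)} : Ideal (𝓞 K))).toFinset
      = m.primeFactors.biUnion (fun p => Fp K p) := by
  ext 𝔭
  rw [Multiset.mem_toFinset,
    UniqueFactorizationMonoid.mem_normalizedFactors_iff (span_ne_zero K hm),
    Finset.mem_biUnion]
  constructor
  · rintro ⟨hprime, hdvd⟩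
    obtain ⟨p, hp, h⟩ := (dvd_span_iff K hprime hm).mp hdvd
    exact ⟨p, hp, (mem_Fp_iff K (Nat.prime_of_mem_primeFactors hp).ne_zero).mpr ⟨hprime, h⟩⟩
  · rintro ⟨p, hp, h⟩
    rw [mem_Fp_iff K (Nat.prime_of_mem_primeFactors hp).ne_zero] at h
    exact ⟨h.1, h.2.trans (span_dvd_span K (Nat.dvd_of_mem_primeFactors hp))⟩

/-- Product formula for `CKcoeff`. -/
lemma CKcoeff_eq {n : ℕ} (hn : n ≠ 0) :
    CKcoeff K n = ∏ p ∈ (n / n.gcd (g K)).primeFactors, loc K p := by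
  have hmt : n / n.gcd (g K) ≠ 0 := by
    have h1 : n.gcd (g K) ∣ n := Nat.gcd_dvd_left _ _
    have h2 : n.gcd (g K) ≠ 0 := fun h => hn (by simpa using (Nat.gcd_eq_zero_iff.mp h).1)
    exact Nat.div_ne_zero_iff_of_dvd h1 |>.mpr ⟨hn, h2⟩
  rw [show CKcoeff K n = (∏ 𝔭 ∈ (normalizedFactors (Ideal.span
        {((n / n.gcd (g K) : ℕ) : 𝓞 K)} : Ideal (𝓞 K))).toFinset,
        (1 + (Ideal.absNorm 𝔭 : ℝ)⁻¹)⁻¹) *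
      ∏ p ∈ (n / n.gcd (g K)).primeFactors,
        (1 - (p : ℝ) ^ (-2 : ℤ) * Ap K p)⁻¹ from rfl]
  rw [factors_span_eq K hmt, Finset.prod_biUnion
    (fun p hp q hq hpq => Fp_disjoint K (Nat.prime_of_mem_primeFactors hp)
      (Nat.prime_of_mem_primeFactors hq) hpq), ← Finset.prod_mul_distrib]
  rfl

lemma mem_T_iff {n p : ℕ} (hn : n ≠ 0) :
    p ∈ (n / n.gcd (g K)).primeFactors ↔ (g K).factorization p < n.factorization p := by
  have h1 : n.gcd (g K) ∣ n := Nat.gcd_dvd_left _ _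
  rw [← Nat.support_factorization, Finsupp.mem_support_iff, Nat.factorization_div h1,
    Nat.factorization_gcd hn (g_ne_zero K)]
  simp only [Finsupp.tsub_apply, Finsupp.inf_apply]
  omega


lemma shape_factorization {S : Finset ℕ} (hS : ∀ p ∈ S, p.Prime) (q : ℕ) :
    (∏ p ∈ S, p ^ ((g K).factorization p + 1)).factorization q
      = if q ∈ S then (g K).factorization q + 1 else 0 := by
  have h : ∀ p ∈ S, ((p ^ ((g K).factorization p + 1)).factorization) q
      = if p = q then (g K).factorization p + 1 else 0 := fun p hp => by
    rw [(hS p hp).factorization_pow, Finsupp.single_apply]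
  rw [Nat.factorization_prod (fun p hp => pow_ne_zero _ (hS p hp).pos.ne'),
    Finset.sum_apply', Finset.sum_congr rfl h, Finset.sum_ite_eq' S q
      (fun p => (g K).factorization p + 1)]

lemma shape_ne_zero {S : Finset ℕ} (hS : ∀ p ∈ S, p.Prime) :
    (∏ p ∈ S, p ^ ((g K).factorization p + 1)) ≠ 0 :=
  Finset.prod_ne_zero_iff.mpr fun p hp => pow_ne_zero _ (hS p hp).pos.ne'

lemma shape_primeFactors {S : Finset ℕ} (hS : ∀ p ∈ S, p.Prime) :
    (∏ p ∈ S, p ^ ((g K).factorization p + 1)).primeFactors = S := by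
  ext q
  rw [← Nat.support_factorization, Finsupp.mem_support_iff, shape_factorization K hS q]
  split <;> simp_all

lemma a_shape {S : Finset ℕ} (hS : ∀ p ∈ S, p.Prime) :
    a K (∏ p ∈ S, p ^ ((g K).factorization p + 1)) = ∏ p ∈ S, (loc K p - 1) := by
  rw [a, if_pos, shape_primeFactors K hS]
  refine ⟨shape_ne_zero K hS, fun p hp => ?_⟩
  rw [shape_primeFactors K hS] at hp
  rw [shape_factorization K hS p, if_pos hp]

lemma sum_a_divisors {n : ℕ} (hn : n ≠ 0) :
    ∑ d ∈ n.divisors, a K d = ∏ p ∈ (n / n.gcd (g K)).primeFactors, loc K p := by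
  set T := (n / n.gcd (g K)).primeFactors with hT
  have hrhs : ∏ p ∈ T, loc K p = ∑ S ∈ T.powerset, ∏ p ∈ S, (loc K p - 1) := by
    have h := Finset.prod_add (fun p => loc K p - 1) (fun _ => (1:ℝ)) T
    simp only [sub_add_cancel, Finset.prod_const_one, mul_one] at h
    exact h
  rw [hrhs, ← Finset.sum_filter_of_ne (s := n.divisors) (f := fun d => a K d)
    (p := fun d => d ≠ 0 ∧ ∀ p ∈ d.primeFactors,
      d.factorization p = (g K).factorization p + 1)
    (fun d _ hd => by by_contra hc; exact hd (by simp only [a]; rw [if_neg hc]))]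
  refine Finset.sum_nbij' (fun d => d.primeFactors)
    (fun S => ∏ p ∈ S, p ^ ((g K).factorization p + 1)) ?_ ?_ ?_ ?_ ?_
  · intro d hd
    simp only [Finset.mem_filter, Nat.mem_divisors] at hd
    obtain ⟨⟨hdn, -⟩, hd0, hcond⟩ := hd
    rw [Finset.mem_powerset]
    intro p hp
    rw [hT, mem_T_iff K hn]
    have hle := (Nat.factorization_le_iff_dvd hd0 hn).mpr hdn p
    have := hcond p hp
    omega
  · intro S hS
    rw [Finset.mem_powerset] at hS
    have hSp : ∀ p ∈ S, p.Prime := fun p hp =>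
      Nat.prime_of_mem_primeFactors (hS hp)
    simp only [Finset.mem_filter, Nat.mem_divisors]
    refine ⟨⟨?_, hn⟩, shape_ne_zero K hSp, fun p hp => ?_⟩
    · rw [← Nat.factorization_le_iff_dvd (shape_ne_zero K hSp) hn]
      intro q
      rw [shape_factorization K hSp q]
      split
      · next hq =>
        have := (mem_T_iff K hn).mp (hS hq)
        omega
      · exact Nat.zero_le _
    · rw [shape_primeFactors K hSp] at hp
      rw [shape_factorization K hSp p, if_pos hp]
  · intro d hd
    simp only [Finset.mem_filter, Nat.mem_divisors] at hd
    obtain ⟨-, hd0, hcond⟩ := hd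
    calc ∏ p ∈ d.primeFactors, p ^ ((g K).factorization p + 1)
        = ∏ p ∈ d.primeFactors, p ^ (d.factorization p) :=
          Finset.prod_congr rfl fun p hp => by rw [hcond p hp]
      _ = d := by
          rw [← Nat.support_factorization]
          exact Nat.factorization_prod_pow_eq_self hd0
  · intro S hS
    rw [Finset.mem_powerset] at hS
    exact shape_primeFactors K (fun p hp => Nat.prime_of_mem_primeFactors (hS hp))
  · intro d hd
    simp only [Finset.mem_filter] at hd
    rw [a, if_pos hd.2]


section norm

variable (hK : Module.finrank ℚ K = 2)
include hK

lemma absNorm_span_prime {p : ℕ} (hp : p.Prime) :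
    Ideal.absNorm (Ideal.span {(p : 𝓞 K)} : Ideal (𝓞 K)) = p ^ 2 := by
  have h1 : ((p : ℕ) : 𝓞 K) = algebraMap ℤ (𝓞 K) (p : ℤ) := by
    simp
  rw [Ideal.absNorm_span_singleton, h1,
    Algebra.norm_algebraMap_of_basis (RingOfIntegers.basis K),
    ← Module.finrank_eq_card_chooseBasisIndex, RingOfIntegers.rank, hK]
  simp [Int.natAbs_pow]

lemma absNorm_dvd_sq {p : ℕ} (hp : p.Prime) {𝔭 : Ideal (𝓞 K)} (h : 𝔭 ∈ Fp K p) :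
    Ideal.absNorm 𝔭 ∣ p ^ 2 := by
  rw [mem_Fp_iff K hp.pos.ne'] at h
  rw [← absNorm_span_prime K hK hp]
  exact Ideal.absNorm_dvd_absNorm_of_le (Ideal.le_of_dvd h.2)

lemma le_absNorm {p : ℕ} (hp : p.Prime) {𝔭 : Ideal (𝓞 K)} (h : 𝔭 ∈ Fp K p) :
    p ≤ Ideal.absNorm 𝔭 := by
  have hdvd := absNorm_dvd_sq K hK hp h
  rw [mem_Fp_iff K hp.pos.ne'] at h
  have h1 : Ideal.absNorm 𝔭 ≠ 1 := by
    intro hc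
    exact h.1.not_unit (Ideal.isUnit_iff.mpr (Ideal.absNorm_eq_one_iff.mp hc))
  obtain ⟨i, hi, heq⟩ := (Nat.dvd_prime_pow hp).mp hdvd
  rw [heq]
  rcases Nat.eq_zero_or_pos i with rfl | hipos
  · rw [heq, pow_zero] at h1; exact absurd rfl h1
  · calc p = p ^ 1 := (pow_one p).symm
      _ ≤ p ^ i := Nat.pow_le_pow_right hp.pos hipos

lemma card_Fp_le {p : ℕ} (hp : p.Prime) : (Fp K p).card ≤ 2 := by
  have hdvd : ∏ 𝔭 ∈ Fp K p, 𝔭 ∣ Ideal.span {(p : 𝓞 K)} :=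
    Finset.prod_primes_dvd _
      (fun 𝔭 h𝔭 => ((mem_Fp_iff K hp.pos.ne').mp h𝔭).1)
      (fun 𝔭 h𝔭 => ((mem_Fp_iff K hp.pos.ne').mp h𝔭).2)
  have hnorm : ∏ 𝔭 ∈ Fp K p, Ideal.absNorm 𝔭 ∣ p ^ 2 := by
    rw [← map_prod]
    rw [← absNorm_span_prime K hK hp]
    exact Ideal.absNorm_dvd_absNorm_of_le (Ideal.le_of_dvd hdvd)
  have hle : p ^ (Fp K p).card ≤ ∏ 𝔭 ∈ Fp K p, Ideal.absNorm 𝔭 := by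
    rw [← Finset.prod_const]
    exact Finset.prod_le_prod' (fun 𝔭 h𝔭 => le_absNorm K hK hp h𝔭)
  have hpos : (0:ℕ) < p ^ 2 := pow_pos hp.pos 2
  have := Nat.le_of_dvd hpos hnorm
  exact (Nat.pow_le_pow_iff_right hp.one_lt).mp (hle.trans this)

end norm

lemma absNorm_pos {p : ℕ} (hp : p ≠ 0) {𝔭 : Ideal (𝓞 K)} (h : 𝔭 ∈ Fp K p) :
    0 < Ideal.absNorm 𝔭 := by
  rw [mem_Fp_iff K hp] at h
  rw [Nat.pos_iff_ne_zero, ne_eq, Ideal.absNorm_eq_zero_iff]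
  intro hc
  rw [hc] at h
  have h2 : (0 : Ideal (𝓞 K)) ∣ Ideal.span {(p : 𝓞 K)} := by
    rw [Ideal.zero_eq_bot]; exact h.2
  exact span_ne_zero K hp (zero_dvd_iff.mp h2)

lemma Ap_pos (p : ℕ) : 0 < Ap K p := by
  refine Finset.prod_pos fun 𝔭 _ => ?_
  positivity

lemma Ap_le_one (p : ℕ) : Ap K p ≤ 1 := by
  refine Finset.prod_le_one (fun 𝔭 _ => by positivity) (fun 𝔭 _ => ?_)
  rw [inv_le_one_iff₀]
  right
  have : (0:ℝ) ≤ (Ideal.absNorm 𝔭 : ℝ)⁻¹ := by positivity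
  linarith

lemma Ap_lower {p : ℕ} (hp : p.Prime) (hK : Module.finrank ℚ K = 2) :
    ((1 + (p:ℝ)⁻¹)⁻¹) ^ 2 ≤ Ap K p := by
  have hpos : (0:ℝ) < (1 + (p:ℝ)⁻¹)⁻¹ := by
    have : (0:ℝ) ≤ (p:ℝ)⁻¹ := by positivity
    positivity
  have hle1 : (1 + (p:ℝ)⁻¹)⁻¹ ≤ 1 := by
    rw [inv_le_one_iff₀]; right
    have : (0:ℝ) ≤ (p:ℝ)⁻¹ := by positivity
    linarith
  calc ((1 + (p:ℝ)⁻¹)⁻¹) ^ 2 ≤ ((1 + (p:ℝ)⁻¹)⁻¹) ^ (Fp K p).card :=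
        pow_le_pow_of_le_one hpos.le hle1 (card_Fp_le K hK hp)
    _ = ∏ _𝔭 ∈ Fp K p, (1 + (p:ℝ)⁻¹)⁻¹ := (Finset.prod_const _).symm
    _ ≤ Ap K p := by
        refine Finset.prod_le_prod (fun 𝔭 _ => hpos.le) (fun 𝔭 h𝔭 => ?_)
        have h1 := le_absNorm K hK hp h𝔭
        have h2 : (0:ℝ) < p := by exact_mod_cast hp.pos
        have h3 : (p:ℝ) ≤ (Ideal.absNorm 𝔭 : ℝ) := by exact_mod_cast h1
        have h4 : (0:ℝ) < (Ideal.absNorm 𝔭 : ℝ) := lt_of_lt_of_le h2 h3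
        apply inv_anti₀
        · positivity
        · have := inv_anti₀ h2 h3
          linarith

section realestimates

variable {p : ℕ} (hp : p.Prime)

lemma zpow_neg_two (hp : p.Prime) : (p : ℝ) ^ (-2 : ℤ) = ((p:ℝ) ^ 2)⁻¹ := by
  rw [zpow_neg]
  norm_cast

lemma denom_pos (hp : p.Prime) : 0 < 1 - (p : ℝ) ^ (-2 : ℤ) * Ap K p := by
  have ht : (2:ℝ) ≤ (p:ℝ) := by exact_mod_cast hp.two_le
  have h1 : (p:ℝ) ^ (-2 : ℤ) * Ap K p ≤ ((p:ℝ)^2)⁻¹ * 1 := by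
    rw [zpow_neg_two hp]
    exact mul_le_mul le_rfl (Ap_le_one K p) (Ap_pos K p).le (by positivity)
  have h2 : ((p:ℝ)^2)⁻¹ ≤ 4⁻¹ := by
    apply inv_anti₀
    · norm_num
    · nlinarith
  linarith

lemma loc_pos (hp : p.Prime) : 0 < loc K p :=
  mul_pos (Ap_pos K p) (inv_pos.mpr (denom_pos K hp))

lemma loc_le (hp : p.Prime) : loc K p ≤ 1 + 2 * ((p:ℝ)^2)⁻¹ := by
  have ht : (2:ℝ) ≤ (p:ℝ) := by exact_mod_cast hp.two_le
  have hA0 := Ap_pos K p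
  have hA1 := Ap_le_one K p
  have hd := denom_pos K hp
  rw [loc, mul_comm, ← div_eq_inv_mul, div_le_iff₀ hd, zpow_neg_two hp]
  have hu : (0:ℝ) < ((p:ℝ)^2)⁻¹ := by positivity
  have hu2 : ((p:ℝ)^2)⁻¹ ≤ 4⁻¹ := by
    apply inv_anti₀; · norm_num
    · nlinarith
  set u : ℝ := ((p:ℝ)^2)⁻¹
  nlinarith [mul_pos hu hA0, mul_nonneg (mul_nonneg hu.le hu.le) hA0.le]

lemma loc_sub_one_abs (hK : Module.finrank ℚ K = 2) (hp : p.Prime) :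
    |loc K p - 1| ≤ 2 / p := by
  have ht : (2:ℝ) ≤ (p:ℝ) := by exact_mod_cast hp.two_le
  have htpos : (0:ℝ) < (p:ℝ) := by linarith
  have hA0 := Ap_pos K p
  have hA1 := Ap_le_one K p
  have hd := denom_pos K hp
  have hA2 := Ap_lower K hp hK
  set u : ℝ := (p:ℝ)⁻¹ with hu_def
  have hu0 : 0 < u := by positivity
  have hu2 : u ≤ 2⁻¹ := by
    rw [hu_def]
    exact inv_anti₀ (by norm_num) ht
  have hut : (p:ℝ) * u = 1 := mul_inv_cancel₀ htpos.ne'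
  have hsq : (p:ℝ) ^ (-2:ℤ) = u ^ 2 := by
    rw [zpow_neg_two hp, hu_def]
    rw [← inv_pow]
  -- lower bound for A : (1+u)⁻¹ ^ 2 ≥ 1 - 2u
  have hw : ((1 + u)⁻¹) ^ 2 ≥ 1 - 2 * u := by
    have h1u : (0:ℝ) < 1 + u := by linarith
    have hw1 : (1 + u)⁻¹ * (1 + u) = 1 := inv_mul_cancel₀ h1u.ne'
    nlinarith [sq_nonneg ((1 + u)⁻¹), sq_nonneg u, mul_pos (inv_pos.mpr h1u) hu0]
  have hAlow : 1 - 2 * u ≤ Ap K p := le_trans hw.le hA2  -- careful: hw : ≥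
  rw [loc, hsq]
  rw [abs_le]
  set A := Ap K p
  have hdu : 0 < 1 - u ^ 2 * A := by rw [hsq] at hd; exact hd
  constructor
  · -- 1 - 2u ≤ A * d⁻¹ suffices since A ≤ A * d⁻¹
    have hdle : 1 - u ^ 2 * A ≤ 1 := by nlinarith
    have h1 : A ≤ A * (1 - u ^ 2 * A)⁻¹ := by
      rw [le_mul_inv_iff₀ hdu]
      nlinarith
    have : 2 / (p:ℝ) = 2 * u := by rw [hu_def, div_eq_mul_inv]
    rw [this]
    linarith
  · have hdiv : 2 / (p:ℝ) = 2 * u := by rw [hu_def, div_eq_mul_inv]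
    have h2 : A * (1 - u ^ 2 * A)⁻¹ ≤ 1 + 2 * u := by
      rw [mul_comm, ← div_eq_inv_mul, div_le_iff₀ hdu]
      nlinarith [mul_nonneg (mul_nonneg hu0.le hu0.le) (mul_nonneg hu0.le hA0.le),
        mul_nonneg hu0.le (sub_nonneg.mpr hA1),
        mul_nonneg (mul_nonneg hu0.le hu0.le) (sub_nonneg.mpr hA1)]
    rw [hdiv]
    linarith

end realestimates


/-! ### Bounding the coefficients `a` -/

lemma prod_le_CE {S E : Finset ℕ} {f : ℕ → ℝ} (h0 : ∀ p, 0 ≤ f p)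
    (h1 : ∀ p ∈ S, p ∉ E → f p ≤ 1) :
    ∏ p ∈ S, f p ≤ ∏ p ∈ E, max (f p) 1 := by
  calc ∏ p ∈ S, f p = (∏ p ∈ S ∩ E, f p) * ∏ p ∈ S \ E, f p :=
        (Finset.prod_inter_mul_prod_diff S E f).symm
    _ ≤ (∏ p ∈ S ∩ E, max (f p) 1) * 1 := by
        apply mul_le_mul
        · exact Finset.prod_le_prod (fun p _ => h0 p) (fun p _ => le_max_left _ _)
        · exact Finset.prod_le_one (fun p _ => h0 p)
            (fun p hp => h1 p (Finset.mem_sdiff.mp hp).1 (Finset.mem_sdiff.mp hp).2)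
        · exact Finset.prod_nonneg (fun p _ => h0 p)
        · exact Finset.prod_nonneg (fun p _ => le_trans zero_le_one (le_max_right _ _))
    _ ≤ ∏ p ∈ E, max (f p) 1 := by
        rw [mul_one]
        have hsub : S ∩ E ⊆ E := Finset.inter_subset_right
        calc ∏ p ∈ S ∩ E, max (f p) 1
            ≤ (∏ p ∈ S ∩ E, max (f p) 1) * ∏ p ∈ E \ (S ∩ E), max (f p) 1 := by
              refine le_mul_of_one_le_right
                (Finset.prod_nonneg fun p _ => le_trans zero_le_one (le_max_right _ _)) ?_
              calc (1:ℝ) = ∏ _p ∈ E \ (S ∩ E), 1 := (Finset.prod_const_one).symm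
                _ ≤ ∏ p ∈ E \ (S ∩ E), max (f p) 1 :=
                  Finset.prod_le_prod (fun p _ => zero_le_one) (fun p _ => le_max_right _ _)
          _ = ∏ p ∈ E, max (f p) 1 := by
              rw [← Finset.prod_inter_mul_prod_diff E (S ∩ E) (fun p => max (f p) 1),
                Finset.inter_comm E (S ∩ E), Finset.inter_eq_left.mpr hsub]

/-- Per-prime contribution to the bound on `a`. -/
noncomputable def hfun (p : ℕ) : ℝ :=
  2 / p * ((p ^ ((g K).factorization p + 1) : ℕ) : ℝ) ^ ((1:ℝ)/2)

lemma hfun_nonneg (p : ℕ) : 0 ≤ hfun K p := by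
  unfold hfun; positivity

noncomputable def Efin : Finset ℕ := (g K).primeFactors ∪ {2, 3}

lemma hfun_le_one {p : ℕ} (hp : p.Prime) (hE : p ∉ Efin K) : hfun K p ≤ 1 := by
  have h2 : p ∉ (g K).primeFactors := fun h => hE (Finset.mem_union_left _ h)
  have h3 : p ≠ 2 ∧ p ≠ 3 := by
    constructor <;> rintro rfl <;> exact hE (Finset.mem_union_right _ (by simp))
  have h5 : 5 ≤ p := by
    have h4 : p ≠ 4 := fun h => by rw [h] at hp; norm_num at hp
    have := hp.two_le
    omega
  have hv : (g K).factorization p = 0 := by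
    rw [← Nat.support_factorization] at h2
    exact Finsupp.notMem_support_iff.mp h2
  rw [hfun, hv]
  have hcast : ((p ^ (0 + 1) : ℕ) : ℝ) = (p : ℝ) := by push_cast; ring
  rw [hcast, ← Real.sqrt_eq_rpow]
  have hppos : (0:ℝ) < p := by exact_mod_cast hp.pos
  have h2sqrt : 2 ≤ Real.sqrt p := by
    rw [Real.le_sqrt (by norm_num) hppos.le]
    have : (5:ℝ) ≤ p := by exact_mod_cast h5
    nlinarith
  have hs := Real.mul_self_sqrt hppos.le
  rw [div_mul_eq_mul_div, div_le_one hppos]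
  nlinarith [Real.sqrt_nonneg (p:ℝ)]

noncomputable def Ca : ℝ := ∏ p ∈ Efin K, max (hfun K p) 1

lemma Ca_nonneg : 0 ≤ Ca K :=
  Finset.prod_nonneg (fun p _ => le_trans zero_le_one (le_max_right _ _))

lemma a_abs_le (hK : Module.finrank ℚ K = 2) {d : ℕ} (hd : d ≠ 0) :
    |a K d| ≤ Ca K * ((d:ℝ) ^ ((1:ℝ)/2))⁻¹ := by
  have hdpos : (0:ℝ) < (d:ℝ) ^ ((1:ℝ)/2) := by
    have : (0:ℝ) < (d:ℝ) := by exact_mod_cast Nat.pos_of_ne_zero hd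
    positivity
  rw [a]
  split
  case isFalse h =>
    rw [abs_zero]
    exact mul_nonneg (Ca_nonneg K) (by positivity)
  case isTrue h =>
    obtain ⟨-, hcond⟩ := h
    set S := d.primeFactors with hS
    have hSp : ∀ p ∈ S, p.Prime := fun p hp => Nat.prime_of_mem_primeFactors hp
    have hdeq : d = ∏ p ∈ S, p ^ ((g K).factorization p + 1) := by
      calc d = ∏ p ∈ S, p ^ (d.factorization p) := by
            rw [hS, ← Nat.support_factorization]
            exact (Nat.factorization_prod_pow_eq_self hd).symm
        _ = ∏ p ∈ S, p ^ ((g K).factorization p + 1) :=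
            Finset.prod_congr rfl fun p hp => by rw [hcond p hp]
    have habs : |∏ p ∈ S, (loc K p - 1)| = ∏ p ∈ S, |loc K p - 1| :=
      Finset.abs_prod S _
    have hX : ((d:ℝ)) ^ ((1:ℝ)/2)
        = ∏ p ∈ S, ((p ^ ((g K).factorization p + 1) : ℕ) : ℝ) ^ ((1:ℝ)/2) := by
      rw [Real.finset_prod_rpow S _ (fun p _ => by positivity) _]
      congr 1
      rw [← Nat.cast_prod, ← hdeq]
    have hkey : (∏ p ∈ S, |loc K p - 1|) * ((d:ℝ)) ^ ((1:ℝ)/2) ≤ Ca K := by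
      rw [hX, ← Finset.prod_mul_distrib]
      refine le_trans (Finset.prod_le_prod (fun p _ => by positivity)
        (fun p hp => ?_)) (prod_le_CE (hfun_nonneg K) (fun p hp hE => hfun_le_one K (hSp p hp) hE))
      · exact mul_le_mul_of_nonneg_right (loc_sub_one_abs K hK (hSp p hp)) (by positivity)
    rw [le_mul_inv_iff₀ hdpos, habs]
    exact hkey

/-! ### Bounding `CKcoeff` -/

lemma summable_two_inv_sq : Summable (fun k : ℕ => 2 * ((k:ℝ)^2)⁻¹) := by
  have h := (Real.summable_one_div_nat_pow (p := 2)).mpr one_lt_two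
  simpa only [one_div] using h.mul_left 2

noncomputable def Cc : ℝ := Real.exp (∑' k : ℕ, 2 * ((k:ℝ)^2)⁻¹)

lemma CK_abs_le {n : ℕ} (hn : n ≠ 0) : |CKcoeff K n| ≤ Cc := by
  rw [CKcoeff_eq K hn]
  set T := (n / n.gcd (g K)).primeFactors with hT
  have hTp : ∀ p ∈ T, p.Prime := fun p hp => Nat.prime_of_mem_primeFactors hp
  rw [abs_of_pos (Finset.prod_pos (fun p hp => loc_pos K (hTp p hp)))]
  calc ∏ p ∈ T, loc K p ≤ ∏ p ∈ T, Real.exp (2 * ((p:ℝ)^2)⁻¹) := by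
        refine Finset.prod_le_prod (fun p hp => (loc_pos K (hTp p hp)).le) (fun p hp => ?_)
        refine le_trans (loc_le K (hTp p hp)) ?_
        have := Real.add_one_le_exp (2 * ((p:ℝ)^2)⁻¹)
        linarith
    _ = Real.exp (∑ p ∈ T, 2 * ((p:ℝ)^2)⁻¹) := (Real.exp_sum T _).symm
    _ ≤ Cc := by
        rw [Cc, Real.exp_le_exp]
        exact Summable.sum_le_tsum T (fun k _ => by positivity) summable_two_inv_sq

lemma part1 {s : ℂ} (hs : 1 < s.re) :
    Summable fun m : ℕ => ‖(CKcoeff K (m + 1) : ℂ) * ((m + 1 : ℕ) : ℂ) ^ (-s)‖ := by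
  have hb : ∀ m : ℕ, ‖(CKcoeff K (m + 1) : ℂ) * ((m + 1 : ℕ) : ℂ) ^ (-s)‖
      ≤ Cc * ((m + 1 : ℕ) : ℝ) ^ (-s.re) := by
    intro m
    rw [norm_mul, Complex.norm_natCast_cpow_of_pos (Nat.succ_pos m), Complex.norm_real]
    apply mul_le_mul ?_ ?_ (by positivity) ?_
    · rw [Real.norm_eq_abs]
      exact CK_abs_le K (Nat.succ_ne_zero m)
    · rw [Complex.neg_re]
    · exact le_trans (abs_nonneg _) (CK_abs_le K one_ne_zero)
  refine Summable.of_nonneg_of_le (fun m => norm_nonneg _) hb ?_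
  apply Summable.mul_left
  have hsum : Summable (fun n : ℕ => ((n:ℝ)) ^ (-s.re)) :=
    Real.summable_nat_rpow.mpr (by linarith)
  exact (summable_nat_add_iff 1).mpr hsum

/-! ### assembling the L-series -/

noncomputable def aC : ℕ → ℂ := fun n => ((a K n : ℝ) : ℂ)

lemma aC_summable (hK : Module.finrank ℚ K = 2) {s : ℂ} (hs : 1/2 < s.re) :
    LSeriesSummable (aC K) s := by
  refine LSeriesSummable_of_le_const_mul_rpow (x := 1/2) hs ⟨Ca K, fun n hn => ?_⟩
  rw [aC, Complex.norm_real, Real.norm_eq_abs]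
  refine le_trans (a_abs_le K hK hn) ?_
  rw [show (1:ℝ)/2 - 1 = -((1:ℝ)/2) by norm_num,
    Real.rpow_neg (Nat.cast_nonneg n)]

lemma conv_eq {n : ℕ} (hn : n ≠ 0) :
    ((CKcoeff K n : ℝ) : ℂ)
      = ((fun m => ((ArithmeticFunction.zeta m : ℕ) : ℂ)) ⍟ aC K) n := by
  simp only [LSeries.convolution_def]
  rw [Nat.sum_divisorsAntidiagonal'
    (f := fun x y => ((ArithmeticFunction.zeta x : ℕ) : ℂ) * aC K y)]
  have hstep : ∀ d ∈ n.divisors,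
      ((ArithmeticFunction.zeta (n/d) : ℕ) : ℂ) * aC K d = aC K d := by
    intro d hd
    obtain ⟨hdvd, -⟩ := Nat.mem_divisors.mp hd
    have hnd : n / d ≠ 0 :=
      Nat.div_ne_zero_iff_of_dvd hdvd |>.mpr ⟨hn, (Nat.pos_of_mem_divisors hd).ne'⟩
    simp only [ArithmeticFunction.zeta_apply, if_neg hnd, Nat.cast_one, one_mul]
  rw [Finset.sum_congr rfl hstep,
    show ∑ d ∈ n.divisors, aC K d = ((∑ d ∈ n.divisors, a K d : ℝ) : ℂ) by push_cast; rfl,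
    sum_a_divisors K hn, ← CKcoeff_eq K hn]


end CKaux

open CKaux in
/-- The Dirichlet series `C_K(s) = ζ(s)^{-1} Σ_{m≥1} c_K(m) m^{-s}` converges
absolutely for `Re(s) > 1` and extends holomorphically to `Re(s) > 1/2`. -/
theorem CK_series_convergence_and_continuation
    (K : Type*) [Field K] [NumberField K] (hK : Module.finrank ℚ K = 2) :
    (∀ s : ℂ, 1 < s.re →
      Summable fun m : ℕ => ‖(CKcoeff K (m + 1) : ℂ) * ((m + 1 : ℕ) : ℂ) ^ (-s)‖) ∧
    ∃ F : ℂ → ℂ, (∀ s : ℂ, 1 / 2 < s.re → DifferentiableAt ℂ F s) ∧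
      ∀ s : ℂ, 1 < s.re →
        F s = (riemannZeta s)⁻¹ *
          ∑' m : ℕ, (CKcoeff K (m + 1) : ℂ) * ((m + 1 : ℕ) : ℂ) ^ (-s) := by
  constructor
  · intro s hs
    exact part1 K hs
  · refine ⟨LSeries (aC K), fun s hs => ?_, fun s hs => ?_⟩
    · have habs : abscissaOfAbsConv (aC K) ≤ ((1/2 : ℝ) : EReal) :=
        abscissaOfAbsConv_le_of_forall_lt_LSeriesSummable fun y hy =>
          aC_summable K hK (by simpa using hy)
      refine (LSeries_hasDerivAt (lt_of_le_of_lt habs ?_)).differentiableAt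
      exact_mod_cast hs
    · have hζ : LSeriesSummable (fun n => ((ArithmeticFunction.zeta n : ℕ) : ℂ)) s :=
        ArithmeticFunction.LSeriesSummable_zeta_iff.mpr hs
      have ha : LSeriesSummable (aC K) s := aC_summable K hK (by linarith)
      have hconv : LSeries (fun n => ((CKcoeff K n : ℝ) : ℂ)) s
          = riemannZeta s * LSeries (aC K) s := by
        rw [← ArithmeticFunction.LSeries_zeta_eq_riemannZeta hs, ← LSeries_convolution' hζ ha]
        exact LSeries_congr (fun hn => conv_eq K hn) s
      have hterm : ∀ m : ℕ, LSeries.term (fun n => ((CKcoeff K n : ℝ) : ℂ)) s (m+1)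
          = (CKcoeff K (m+1) : ℂ) * ((m+1 : ℕ) : ℂ) ^ (-s) := by
        intro m
        rw [LSeries.term_of_ne_zero (Nat.succ_ne_zero m), Complex.cpow_neg, div_eq_mul_inv]
      have hsumm : Summable (fun n => LSeries.term (fun n => ((CKcoeff K n : ℝ) : ℂ)) s n) := by
        apply Summable.of_norm
        apply (summable_nat_add_iff 1).mp
        refine (part1 K hs).congr fun m => ?_
        rw [hterm m]
      have htsum : LSeries (fun n => ((CKcoeff K n : ℝ) : ℂ)) s
          = ∑' m : ℕ, (CKcoeff K (m+1) : ℂ) * ((m+1 : ℕ) : ℂ) ^ (-s) := by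
        rw [LSeries, Summable.tsum_eq_zero_add hsumm, LSeries.term_zero, zero_add]
        exact tsum_congr hterm
      rw [← htsum, hconv, ← mul_assoc,
        inv_mul_cancel₀ (riemannZeta_ne_zero_of_one_lt_re hs), one_mul]
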